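/- Arbitrary positive announcements have the Church–Rosser property on S5: for every φ ∈ L_PAPAL, the formula ◊⁺□⁺φ → □⁺◊⁺φ is valid on S5. -/

import Mathlib

/-- An epistemic (S5) model: a nonempty set of states, an equivalence
relation for each agent, and a valuation of atoms. -/
structure EpiModel (A P : Type) where
  S : Type
  ne : Nonempty S
  rel : A → S → S → Prop
  equiv : ∀ a, Equivalence (rel a)
  val : P → Set S

/-- Positive formulas L_EL⁺ : p | ¬p | ∧ | ∨ | K_a. -/
inductive PosForm (A P : Type) where
  | atom : P → PosForm A P
  | natom : P → PosForm A P
  | and : PosForm A P → PosForm A P → PosForm A P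
  | or : PosForm A P → PosForm A P → PosForm A P
  | know : A → PosForm A P → PosForm A P

/-- Satisfaction of a positive formula, relativized to a current domain `D`
(representing the submodel of `M` induced by `D`). -/
def PosForm.sat {A P : Type} (M : EpiModel A P) : PosForm A P → Set M.S → M.S → Prop
  | .atom p, _, s => s ∈ M.val p
  | .natom p, _, s => s ∉ M.val p
  | .and φ ψ, D, s => PosForm.sat M φ D s ∧ PosForm.sat M ψ D s
  | .or φ ψ, D, s => PosForm.sat M φ D s ∨ PosForm.sat M ψ D s
  | .know a φ, D, s => ∀ t, M.rel a s t → t ∈ D → PosForm.sat M φ D t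

/-- The language L_PAPAL : atoms, ¬, ∧, K_a, announcements [ψ]φ and the
positive arbitrary-announcement quantifier □⁺. -/
inductive Form (A P : Type) where
  | atom : P → Form A P
  | neg : Form A P → Form A P
  | and : Form A P → Form A P → Form A P
  | know : A → Form A P → Form A P
  | ann : Form A P → Form A P → Form A P
  | pbox : Form A P → Form A P

/-- Satisfaction, relativized to a current domain `D`: `Form.sat M φ D s`
means that φ holds at state `s` of the restriction of `M` to `D`.
Announcement `[ψ]φ` further restricts the domain to the states of `D`
satisfying ψ; `□⁺φ` quantifies over announcements of positive formulas. -/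
def Form.sat {A P : Type} (M : EpiModel A P) : Form A P → Set M.S → M.S → Prop
  | .atom p, _, s => s ∈ M.val p
  | .neg φ, D, s => ¬ Form.sat M φ D s
  | .and φ ψ, D, s => Form.sat M φ D s ∧ Form.sat M ψ D s
  | .know a φ, D, s => ∀ t, M.rel a s t → t ∈ D → Form.sat M φ D t
  | .ann ψ φ, D, s => Form.sat M ψ D s → Form.sat M φ {t | t ∈ D ∧ Form.sat M ψ D t} s
  | .pbox φ, D, s => ∀ χ : PosForm A P, PosForm.sat M χ D s →
      Form.sat M φ {t | t ∈ D ∧ PosForm.sat M χ D t} s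

/-- Truth at a pointed model `M_s`. -/
def Sat {A P : Type} (M : EpiModel A P) (s : M.S) (φ : Form A P) : Prop :=
  Form.sat M φ Set.univ s

def Form.or {A P : Type} (φ ψ : Form A P) : Form A P := .neg (.and (.neg φ) (.neg ψ))
def Form.imp {A P : Type} (φ ψ : Form A P) : Form A P := Form.or (.neg φ) ψ
def Form.iff {A P : Type} (φ ψ : Form A P) : Form A P := .and (Form.imp φ ψ) (Form.imp ψ φ)
def Form.pdia {A P : Type} (φ : Form A P) : Form A P := .neg (.pbox (.neg φ))
def Form.lknow {A P : Type} (a : A) (φ : Form A P) : Form A P := .neg (.know a (.neg φ))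

/-- Validity on the class S5 of all epistemic models. -/
def Valid (A P : Type) (φ : Form A P) : Prop :=
  ∀ (M : EpiModel A P) (s : M.S), Sat M s φ

/-! ### Auxiliary machinery for the Church–Rosser proof -/

/-- The list of atoms occurring in a formula. -/
def Form.atoms {A P : Type} : Form A P → List P
  | .atom p => [p]
  | .neg φ => φ.atoms
  | .and φ ψ => φ.atoms ++ ψ.atoms
  | .know _ φ => φ.atoms
  | .ann ψ φ => ψ.atoms ++ φ.atoms
  | .pbox φ => φ.atoms

/-- Some atom occurring in a positive formula (positive formulas always
contain at least one literal). -/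
def PosForm.anAtom {A P : Type} : PosForm A P → P
  | .atom p => p
  | .natom p => p
  | .and φ _ => φ.anAtom
  | .or φ _ => φ.anAtom
  | .know _ φ => φ.anAtom

open Classical in
/-- The literal (over atom `p`) true at state `s`. -/
noncomputable def lit {A P : Type} (M : EpiModel A P) (s : M.S) (p : P) : PosForm A P :=
  if s ∈ M.val p then .atom p else .natom p

lemma lit_sat {A P : Type} (M : EpiModel A P) (s : M.S) (p : P) (D : Set M.S) (t : M.S) :
    PosForm.sat M (lit M s p) D t ↔ (t ∈ M.val p ↔ s ∈ M.val p) := by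
  unfold lit
  by_cases h : s ∈ M.val p <;> simp [h, PosForm.sat]

/-- The conjunction of the literals true at `s` over the atoms in `l`,
with base literal over `p₀`. -/
noncomputable def typeF {A P : Type} (M : EpiModel A P) (s : M.S) (l : List P) (p₀ : P) :
    PosForm A P :=
  l.foldr (fun q acc => .and (lit M s q) acc) (lit M s p₀)

lemma typeF_sat {A P : Type} (M : EpiModel A P) (s : M.S) (l : List P) (p₀ : P)
    (D : Set M.S) (t : M.S) :
    PosForm.sat M (typeF M s l p₀) D t ↔
      ∀ p ∈ p₀ :: l, (t ∈ M.val p ↔ s ∈ M.val p) := by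
  induction l with
  | nil => simp [typeF, lit_sat]
  | cons q l ih =>
      have : PosForm.sat M (typeF M s (q :: l) p₀) D t
          = (PosForm.sat M (lit M s q) D t ∧ PosForm.sat M (typeF M s l p₀) D t) := rfl
      rw [this, lit_sat, ih]
      constructor
      · rintro ⟨hq, hrest⟩ p hp
        rcases List.mem_cons.mp hp with h | h
        · exact h ▸ hrest p₀ (List.mem_cons_self)
        · rcases List.mem_cons.mp h with h' | h'
          · exact h' ▸ hq
          · exact hrest p (List.mem_cons_of_mem _ h')
      · intro h
        refine ⟨h q (List.mem_cons_of_mem _ (List.mem_cons_self)), ?_⟩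
        intro p hp
        rcases List.mem_cons.mp hp with h' | h'
        · exact h p (h' ▸ List.mem_cons_self)
        · exact h p (List.mem_cons_of_mem _ (List.mem_cons_of_mem _ h'))

/-- **Collapse lemma.** If all states of `U₁` and `U₂` agree with `s` on all
atoms in `V`, and all atoms of `φ` are in `V` (and some `p₀ ∈ V`), then the
truth value of `φ` is the same at any state of the restriction to `U₁` and any
state of the restriction to `U₂`.  This uses reflexivity of the S5 relations. -/
lemma collapse {A P : Type} (M : EpiModel A P) (s : M.S) (V : List P) (p₀ : P)
    (hp₀ : p₀ ∈ V) :
    ∀ (φ : Form A P), (∀ p ∈ Form.atoms φ, p ∈ V) →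
    ∀ (U₁ U₂ : Set M.S),
      (∀ x ∈ U₁, ∀ p ∈ V, (x ∈ M.val p ↔ s ∈ M.val p)) →
      (∀ x ∈ U₂, ∀ p ∈ V, (x ∈ M.val p ↔ s ∈ M.val p)) →
      ∀ t u, t ∈ U₁ → u ∈ U₂ → Form.sat M φ U₁ t → Form.sat M φ U₂ u := by
  intro φ
  induction φ with
  | atom p =>
      intro hat U₁ U₂ h1 h2 t u ht hu hsat
      have hp : p ∈ V := hat p (by simp [Form.atoms])
      exact (h2 u hu p hp).mpr ((h1 t ht p hp).mp hsat)
  | neg φ ih =>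
      intro hat U₁ U₂ h1 h2 t u ht hu hsat hcon
      exact hsat (ih hat U₂ U₁ h2 h1 u t hu ht hcon)
  | and φ₁ φ₂ ih₁ ih₂ =>
      intro hat U₁ U₂ h1 h2 t u ht hu hsat
      have hat₁ : ∀ p ∈ Form.atoms φ₁, p ∈ V := fun p hp =>
        hat p (List.mem_append_left _ hp)
      have hat₂ : ∀ p ∈ Form.atoms φ₂, p ∈ V := fun p hp =>
        hat p (List.mem_append_right _ hp)
      exact ⟨ih₁ hat₁ U₁ U₂ h1 h2 t u ht hu hsat.1,
             ih₂ hat₂ U₁ U₂ h1 h2 t u ht hu hsat.2⟩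
  | know a φ ih =>
      intro hat U₁ U₂ h1 h2 t u ht hu hsat u' _ hu'
      exact ih hat U₁ U₂ h1 h2 t u' ht hu' (hsat t ((M.equiv a).refl t) ht)
  | ann θ φ ihθ ihφ =>
      intro hat U₁ U₂ h1 h2 t u ht hu hsat hθu
      have hatθ : ∀ p ∈ Form.atoms θ, p ∈ V := fun p hp =>
        hat p (List.mem_append_left _ hp)
      have hatφ : ∀ p ∈ Form.atoms φ, p ∈ V := fun p hp =>
        hat p (List.mem_append_right _ hp)
      have hθt : Form.sat M θ U₁ t := ihθ hatθ U₂ U₁ h2 h1 u t hu ht hθu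
      have hφt := hsat hθt
      exact ihφ hatφ {x | x ∈ U₁ ∧ Form.sat M θ U₁ x} {x | x ∈ U₂ ∧ Form.sat M θ U₂ x}
        (fun x hx => h1 x hx.1) (fun x hx => h2 x hx.1)
        t u ⟨ht, hθt⟩ ⟨hu, hθu⟩ hφt
  | pbox φ ih =>
      intro hat U₁ U₂ h1 h2 t u ht hu hsat χ hχ
      have hlit : PosForm.sat M (lit M s p₀) U₁ t :=
        (lit_sat M s p₀ U₁ t).mpr (h1 t ht p₀ hp₀)
      have hφt := hsat (lit M s p₀) hlit
      exact ih hat {x | x ∈ U₁ ∧ PosForm.sat M (lit M s p₀) U₁ x}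
        {x | x ∈ U₂ ∧ PosForm.sat M χ U₂ x}
        (fun x hx => h1 x hx.1) (fun x hx => h2 x hx.1)
        t u ⟨ht, hlit⟩ ⟨hu, hχ⟩ hφt

/-- Arbitrary positive announcements have the Church–Rosser
property on S5: `◊⁺□⁺φ → □⁺◊⁺φ` is valid for every φ ∈ L_PAPAL. -/
theorem pbox_church_rosser (A P : Type) (φ : Form A P) :
    Valid A P (Form.imp (Form.pdia (.pbox φ)) (.pbox (Form.pdia φ))) := by
  intro M s
  show Form.sat M (.neg (.and (.neg (.neg (Form.pdia (.pbox φ)))) (.neg (.pbox (Form.pdia φ)))))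
    Set.univ s
  rintro ⟨hnnA, hnB⟩
  apply hnB
  -- goal : Form.sat M (.pbox (Form.pdia φ)) Set.univ s
  intro η hη
  show Form.sat M (.neg (.pbox (.neg φ))) {t | t ∈ Set.univ ∧ PosForm.sat M η Set.univ t} s
  intro hall
  -- extract the ◊⁺□⁺φ witness ψ
  have hA : ¬ (∀ ψ : PosForm A P, PosForm.sat M ψ Set.univ s →
      ¬ Form.sat M (.pbox φ) {t | t ∈ Set.univ ∧ PosForm.sat M ψ Set.univ t} s) := by
    intro hforall
    exact hnnA (fun hA' => hA' hforall)
  push_neg at hA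
  obtain ⟨ψ, hψs, hboxψ⟩ := hA
  set p₀ := ψ.anAtom with hp₀def
  set δ := typeF M s (Form.atoms φ) p₀ with hδdef
  have hδ_sat : ∀ D : Set M.S, PosForm.sat M δ D s := by
    intro D
    rw [hδdef, typeF_sat]
    intro p _
    exact Iff.rfl
  set Dψ : Set M.S := {t | t ∈ Set.univ ∧ PosForm.sat M ψ Set.univ t} with hDψ
  set Dη : Set M.S := {t | t ∈ Set.univ ∧ PosForm.sat M η Set.univ t} with hDη
  have hX1 : Form.sat M φ {t | t ∈ Dψ ∧ PosForm.sat M δ Dψ t} s := hboxψ δ (hδ_sat Dψ)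
  have hX2 : Form.sat M φ {t | t ∈ Dη ∧ PosForm.sat M δ Dη t} s := by
    have hmem : ∀ (D : Set M.S), ∀ x ∈ {t | t ∈ D ∧ PosForm.sat M δ D t},
        ∀ p ∈ p₀ :: Form.atoms φ, (x ∈ M.val p ↔ s ∈ M.val p) := by
      intro D x hx
      have := (typeF_sat M s (Form.atoms φ) p₀ D x).mp hx.2
      exact this
    exact collapse M s (p₀ :: Form.atoms φ) p₀ (List.mem_cons_self) φ
      (fun p hp => List.mem_cons_of_mem _ hp)
      {t | t ∈ Dψ ∧ PosForm.sat M δ Dψ t} {t | t ∈ Dη ∧ PosForm.sat M δ Dη t}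
      (hmem Dψ) (hmem Dη) s s
      ⟨⟨trivial, hψs⟩, hδ_sat Dψ⟩ ⟨⟨trivial, hη⟩, hδ_sat Dη⟩ hX1
  exact hall δ (hδ_sat Dη) hX2
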